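/- Let g be a finite-dimensional real Lie algebra with an invariant inner product, h a Lie subalgebra, m the orthogonal complement of h in g, and m = m_1 ⊕ … ⊕ m_k an orthogonal direct sum decomposition into subspaces with [h, m_i] ⊆ m_i for each i. Suppose that pr_m([Λ(u), u]) = 0 for every u ∈ m and every metric operator Λ. Then [m_i, m_j] ⊆ h whenever i ≠ j. -/

import Mathlib

/- An inner product on a real Lie algebra `g` is encoded as a symmetric, positive
definite bilinear form `B` which is invariant: `B ⁅z,x⁆ y + B x ⁅z,y⁆ = 0`.
`h` is a Lie subalgebra, `m` its orthogonal complement, `prh`/`prm` the projections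
onto `h` and `m`, and `m = m₁ ⊕ ⋯ ⊕ m_k` an orthogonal decomposition with
`[h, m_i] ⊆ m_i`.  A metric operator is a linear map `Λ : m → m` which is symmetric
and positive definite with respect to `B` and satisfies `Λ ⁅v,w⁆ = ⁅v, Λ w⁆` for
`v ∈ h`, `w ∈ m`.  Assuming `pr_m ⁅Λ u, u⁆ = 0` for all `u ∈ m` and all metric
operators `Λ`, we conclude `⁅m_i, m_j⁆ ⊆ h` for `i ≠ j` (Claim 1 of Theorem 3.5). -/
theorem statement_1
    {g : Type*} [LieRing g] [LieAlgebra ℝ g] [FiniteDimensional ℝ g]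
    (B : g →ₗ[ℝ] g →ₗ[ℝ] ℝ)
    (hBsymm : ∀ x y : g, B x y = B y x)
    (hBpos : ∀ x : g, x ≠ 0 → 0 < B x x)
    (hBinv : ∀ x y z : g, B ⁅z, x⁆ y + B x ⁅z, y⁆ = 0)
    (h : LieSubalgebra ℝ g)
    (m : Submodule ℝ g)
    (hm : ∀ x : g, x ∈ m ↔ ∀ y ∈ h, B x y = 0)
    (prh prm : g →ₗ[ℝ] g)
    (hprh : ∀ x : g, prh x ∈ h)
    (hprm : ∀ x : g, prm x ∈ m)
    (hpr : ∀ x : g, prh x + prm x = x)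
    (k : ℕ) (mi : Fin k → Submodule ℝ g)
    (hsup : ⨆ i, mi i = m)
    (horth : ∀ i j, i ≠ j → ∀ x ∈ mi i, ∀ y ∈ mi j, B x y = 0)
    (hhmi : ∀ i, ∀ v ∈ h, ∀ x ∈ mi i, ⁅v, x⁆ ∈ mi i)
    (hequi : ∀ Λ : m →ₗ[ℝ] m,
      (∀ u v : m, B (Λ u : g) (v : g) = B (u : g) (Λ v : g)) →
      (∀ u : m, u ≠ 0 → 0 < B (Λ u : g) (u : g)) →
      (∀ v ∈ h, ∀ w : m, ∀ hvw : ⁅v, (w : g)⁆ ∈ m,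
        ((Λ ⟨⁅v, (w : g)⁆, hvw⟩ : m) : g) = ⁅v, (Λ w : g)⁆) →
      ∀ u : m, prm ⁅(Λ u : g), (u : g)⁆ = 0) :
    ∀ i j, i ≠ j → ∀ x ∈ mi i, ∀ y ∈ mi j, ⁅x, y⁆ ∈ h := by
  intro i j hij x hx y hy
  have hmile : ∀ i', mi i' ≤ m := fun i' => hsup ▸ le_iSup mi i'
  -- build an inner product space structure from B
  letI c : InnerProductSpace.Core ℝ g :=
  { inner := fun a b => B a b
    conj_inner_symm := fun a b => by simpa using hBsymm b a
    re_inner_nonneg := fun a => by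
      by_cases ha : a = 0
      · simp [ha]
      · exact le_of_lt (by simpa using hBpos a ha)
    add_left := fun a b z => by simp
    smul_left := fun a b r => by simp [mul_comm]
    definite := fun a ha => by
      by_contra hne
      exact (hBpos a hne).ne' (by simpa using ha) }
  letI : NormedAddCommGroup g := c.toNormedAddCommGroup
  letI : InnerProductSpace ℝ g := InnerProductSpace.ofCore c.toCore
  have hBi : ∀ a b : g, B a b = inner ℝ a b := fun _ _ => rfl
  haveI : CompleteSpace (mi i) := FiniteDimensional.complete ℝ (mi i)
  set P := (mi i).orthogonalProjectionOnto with hP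
  -- the metric operator Λ = id + P
  let Λ : m →ₗ[ℝ] m :=
  { toFun := fun u => u + ⟨(P (u : g) : g), hmile i (P (u : g)).2⟩
    map_add' := fun u v => by
      ext; simp [add_add_add_comm]
    map_smul' := fun r u => by
      ext; simp [smul_add] }
  have hΛ : ∀ u : m, (Λ u : g) = (u : g) + (P (u : g) : g) := fun u => rfl
  have hsym : ∀ u v : m, B (Λ u : g) (v : g) = B (u : g) (Λ v : g) := by
    intro u v
    rw [hΛ, hΛ]
    simp only [map_add, LinearMap.add_apply, hBi]
    rw [inner_add_right]; congr 1; exact Submodule.inner_starProjection_left_eq_right (mi i) u v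
  have hpos : ∀ u : m, u ≠ 0 → 0 < B (Λ u : g) (u : g) := by
    intro u hu
    rw [hΛ]
    simp only [map_add, LinearMap.add_apply]
    have h1 : 0 < B (u : g) (u : g) :=
      hBpos _ (fun h0 => hu (Subtype.ext h0))
    have h2 : (0:ℝ) ≤ B (P (u : g) : g) (u : g) := by
      have := Submodule.starProjection_inner_eq_zero (K := mi i) (u : g)
        (P (u : g) : g) (P (u : g)).2
      have h3 : inner ℝ ((u:g) - (P (u:g) : g)) (P (u:g) : g) = (0:ℝ) := this
      have h4 : (inner ℝ (u:g) (P (u:g):g) : ℝ) = inner ℝ (P (u:g):g) (P (u:g):g) := by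
        rw [inner_sub_left] at h3; linarith
      rw [hBi, real_inner_comm, h4]
      exact real_inner_self_nonneg
    linarith
  have heqv : ∀ v ∈ h, ∀ w : m, ∀ hvw : ⁅v, (w : g)⁆ ∈ m,
      ((Λ ⟨⁅v, (w : g)⁆, hvw⟩ : m) : g) = ⁅v, (Λ w : g)⁆ := by
    intro v hv w hvw
    rw [hΛ, hΛ]
    have key : (P ⁅v, (w : g)⁆ : g) = ⁅v, (P (w:g) : g)⁆ := by
      apply Submodule.eq_starProjection_of_mem_of_inner_eq_zero
      · exact hhmi i v hv _ (P (w:g)).2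
      · intro z hz
        have : ⁅v, (w:g)⁆ - ⁅v, (P (w:g) : g)⁆ = ⁅v, (w:g) - (P (w:g) : g)⁆ := by
          rw [lie_sub]
        rw [this]
        have hz' : ⁅v, z⁆ ∈ mi i := hhmi i v hv z hz
        have h5 := hBinv ((w:g) - (P (w:g) : g)) z v
        have h6 : B ((w:g) - (P (w:g):g)) ⁅v, z⁆ = 0 := by
          rw [hBi]
          exact Submodule.starProjection_inner_eq_zero (w:g) ⁅v,z⁆ hz'
        rw [← hBi]
        linarith
    simp only [lie_add]
    rw [key]
  have key := hequi Λ hsym hpos heqv ⟨x + y, m.add_mem (hmile i hx) (hmile j hy)⟩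
  have hPx : (P x : g) = x := Submodule.starProjection_eq_self_iff.2 hx
  have hPy : (P y : g) = 0 := by
    have : y ∈ (mi i)ᗮ := by
      intro z hz
      rw [← hBi, hBsymm]
      exact horth j i (Ne.symm hij) y hy z hz
    simp [hP, Submodule.orthogonalProjectionOnto_apply_of_mem_orthogonal this]
  rw [hΛ] at key
  simp only [map_add, Submodule.coe_add, hPx, hPy] at key
  have hcalc : ⁅(x + y) + ((x : g) + 0), x + y⁆ = ⁅x, y⁆ := by
    have hyx : ⁅y, x⁆ = -⁅x, y⁆ := by rw [← lie_skew]
    simp only [add_zero, add_lie, lie_add, lie_self, zero_add, hyx]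
    abel
  rw [hcalc] at key
  have := hpr ⁅x, y⁆
  rw [key, add_zero] at this
  rw [← this]
  exact hprh _
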